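/- For the regular tree T of degree 4 (the Cayley graph of the free group on 2 generators), the tree entropy h(T) = log d - ∑_{k≥1} p_k(o;T)/k equals 3 log(3/2). -/

import Mathlib

/-- The generating set of the free group on two letters: the two generators and their
inverses. The corresponding Cayley graph is the 4-regular tree. -/
def genSet : Set (FreeGroup (Fin 2)) :=
  {g | ∃ i : Fin 2, g = FreeGroup.of i ∨ g = (FreeGroup.of i)⁻¹}

/-- The `k`-step return probability of simple random walk on the 4-regular tree
(the Cayley graph of the free group on two generators), i.e. the number of words of length
`k` in the generators whose product is the identity, divided by `4^k`. -/
noncomputable def retProb (k : ℕ) : ℝ :=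
  (Nat.card {w : Fin k → genSet //
      (List.ofFn fun i => ((w i : FreeGroup (Fin 2)))).prod = 1} : ℝ) / 4 ^ k


namespace FreeGroup
variable {α : Type*} [DecidableEq α]

theorem reduced_tail {x : α × Bool} {L : List (α × Bool)}
    (h : reduce (x :: L) = x :: L) : reduce L = L := by
  rw [reduce.cons] at h
  cases hL : reduce L with
  | nil =>
    rw [hL] at h
    simp only [List.casesOn] at h
    have hnil : L = [] := by simpa using h
    rw [hnil] at hL ⊢
  | cons hd tl =>
    rw [hL] at h
    simp only at h
    by_cases hc : x.1 = hd.1 ∧ x.2 = !hd.2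
    · rw [if_pos hc] at h
      have hlen := Red.length_le (reduce.red (L := L))
      rw [hL, h] at hlen
      simp at hlen
    · rw [if_neg hc] at h
      have hL2 : L = hd :: tl := (List.tail_eq_of_cons_eq h).symm
      rw [hL2, ← hL, hL2]

theorem reduced_no_cancel {x y : α × Bool} {M : List (α × Bool)}
    (h : reduce (x :: y :: M) = x :: y :: M) : ¬(x.1 = y.1 ∧ x.2 = !y.2) := by
  have hM : reduce (y :: M) = y :: M := reduced_tail h
  rw [reduce.cons, hM] at h
  simp only at h
  intro hc
  rw [if_pos hc] at h
  have := congrArg List.length h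
  simp at this
  omega

/-- appending a non-cancelling letter keeps a word reduced -/
theorem reduced_append_single {L : List (α × Bool)} (x : α × Bool)
    (hred : reduce L = L) (hlast : L = [] ∨ L.getLast? ≠ some (x.1, !x.2)) :
    reduce (L ++ [x]) = L ++ [x] := by
  induction L with
  | nil => simp [reduce_singleton]
  | cons a M ih =>
    have hM : reduce M = M := reduced_tail hred
    have ihM : reduce (M ++ [x]) = M ++ [x] := by
      apply ih hM
      cases M with
      | nil => exact Or.inl rfl
      | cons b M' =>
        right
        rcases hlast with h | h
        · exact absurd h (by simp)
        · rwa [List.getLast?_cons_cons] at h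
    rw [List.cons_append, reduce.cons, ihM]
    cases M with
    | nil =>
      simp only [List.nil_append]
      have hne : ¬(a.1 = x.1 ∧ a.2 = !x.2) := by
        rcases hlast with h | h
        · simp at h
        · intro hc
          apply h
          simp only [List.getLast?_singleton]
          have : a = (x.1, !x.2) := Prod.ext hc.1 hc.2
          rw [this]
      rw [if_neg hne]
    | cons b M' =>
      simp only [List.cons_append]
      have hne : ¬(a.1 = b.1 ∧ a.2 = !b.2) := reduced_no_cancel hred
      rw [if_neg hne]

/-- the dropLast of a reduced word is reduced -/
theorem reduced_dropLast {L : List (α × Bool)} (hred : reduce L = L) :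
    reduce L.dropLast = L.dropLast := by
  cases hL : invRev L with
  | nil =>
    have : L = [] := by
      have := congrArg invRev hL
      rwa [invRev_invRev, invRev_empty] at this
    simp [this]
  | cons c T =>
    have h1 : reduce (invRev L) = invRev L := by
      rw [reduce_invRev, hred]
    rw [hL] at h1
    have h2 : reduce T = T := reduced_tail h1
    have hT : T = invRev L.dropLast := by
      have : T = (invRev L).tail := by rw [hL]; rfl
      rw [this]
      show (List.map (fun g : α × Bool => (g.1, !g.2)) L).reverse.tail = _
      rw [List.tail_reverse, ← List.map_dropLast]
      rfl
    rw [hT] at h2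
    have := congrArg invRev h2
    rwa [← reduce_invRev, invRev_invRev] at this

end FreeGroup

namespace FreeGroup
variable {α : Type*} [DecidableEq α]

theorem norm_def (g : FreeGroup α) : norm g = g.toWord.length := rfl

theorem norm_mul_single_cancel {g : FreeGroup α} (hg : g.toWord ≠ [])
    {a : α} {b : Bool} (hlast : g.toWord.getLast hg = (a, b)) :
    norm (g * mk [(a, !b)]) + 1 = norm g := by
  set L := g.toWord with hL
  have hgmk : g = mk L := mk_toWord.symm
  have hsplit : L.dropLast ++ [(a, b)] = L := by
    rw [← hlast]; exact List.dropLast_append_getLast hg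
  have hred : reduce L = L := reduce_toWord g
  have h1 : g * mk [(a, !b)] = mk L.dropLast := by
    rw [hgmk, mul_mk, ← hsplit]
    have step := @Red.Step.not α L.dropLast [] a b
    have h' : (mk (L.dropLast ++ (a, b) :: (a, !b) :: []) : FreeGroup α) = mk (L.dropLast ++ []) := Quot.sound step
    simpa using h'
  rw [h1, norm_def, toWord_mk, reduced_dropLast hred]
  rw [norm_def, ← hL, ← hsplit]
  simp

theorem norm_mul_single_ext {g : FreeGroup α} {c : α} {d : Bool}
    (h : g.toWord = [] ∨ g.toWord.getLast? ≠ some (c, !d)) :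
    norm (g * mk [(c, d)]) = norm g + 1 := by
  have hgmk : g = mk g.toWord := mk_toWord.symm
  have hred : reduce g.toWord = g.toWord := reduce_toWord g
  have h2 : reduce (g.toWord ++ [(c, d)]) = g.toWord ++ [(c, d)] :=
    reduced_append_single (c, d) hred h
  conv_lhs => rw [hgmk]
  rw [mul_mk, norm_def, toWord_mk, h2, norm_def]
  simp

theorem norm_single (c : α) (d : Bool) : norm (mk [(c, d)]) = 1 := by
  rw [norm_def, toWord_mk, reduce_singleton]
  rfl

end FreeGroup


namespace Tree4

open FreeGroup

/-- the four generators, indexed by `Fin 2 × Bool` -/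
def gen (p : Fin 2 × Bool) : FreeGroup (Fin 2) := FreeGroup.mk [p]

lemma of_eq_mk (i : Fin 2) : FreeGroup.of i = FreeGroup.mk [(i, true)] := rfl

lemma inv_of_eq_mk (i : Fin 2) : (FreeGroup.of i)⁻¹ = FreeGroup.mk [(i, false)] := by
  rw [of_eq_mk, inv_mk]
  rfl

lemma gen_mem (p : Fin 2 × Bool) : gen p ∈ genSet := by
  refine ⟨p.1, ?_⟩
  cases hp : p.2
  · right; rw [inv_of_eq_mk, gen]
    congr 1
    rw [← hp]
  · left; rw [of_eq_mk, gen]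
    congr 1
    rw [← hp]

lemma gen_injective : Function.Injective gen := by
  intro p q h
  have := congrArg FreeGroup.toWord h
  rw [gen, gen, toWord_mk, toWord_mk, reduce_singleton, reduce_singleton] at this
  simpa using this

noncomputable def genEquiv : (Fin 2 × Bool) ≃ genSet := by
  apply Equiv.ofBijective (fun p => (⟨gen p, gen_mem p⟩ : genSet))
  constructor
  · intro p q h
    exact gen_injective (congrArg Subtype.val h)
  · rintro ⟨s, i, h | h⟩
    · exact ⟨(i, true), by simp [h, of_eq_mk, gen]⟩
    · exact ⟨(i, false), by simp [h, inv_of_eq_mk, gen]⟩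

instance : Finite genSet := Finite.of_equiv _ genEquiv

@[simp] lemma genEquiv_coe (p : Fin 2 × Bool) : (genEquiv p : FreeGroup (Fin 2)) = gen p := rfl

/-- walks of length `k` from `g` to `1` in the Cayley graph -/
def Wtype (g : FreeGroup (Fin 2)) (k : ℕ) : Type :=
  {w : Fin k → genSet // g * (List.ofFn fun i => ((w i : FreeGroup (Fin 2)))).prod = 1}

instance (g : FreeGroup (Fin 2)) (k : ℕ) : Finite (Wtype g k) := by
  unfold Wtype; infer_instance

noncomputable def Nf (g : FreeGroup (Fin 2)) (k : ℕ) : ℕ := Nat.card (Wtype g k)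

lemma nat_card_sigma {ι : Type*} [Fintype ι] (T : ι → Type*) [∀ i, Finite (T i)] :
    Nat.card (Σ i, T i) = ∑ i, Nat.card (T i) := by
  letI : ∀ i, Fintype (T i) := fun i => Fintype.ofFinite _
  simp [Nat.card_eq_fintype_card, Fintype.card_sigma]

lemma Nf_zero (g : FreeGroup (Fin 2)) : Nf g 0 = if g = 1 then 1 else 0 := by
  by_cases hg : g = 1
  · rw [if_pos hg]
    have : Wtype g 0 ≃ PUnit.{1} := by
      apply Equiv.ofBijective (fun _ => PUnit.unit)
      constructor
      · rintro ⟨w1, h1⟩ ⟨w2, h2⟩ _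
        apply Subtype.ext
        funext i
        exact absurd i.2 (by simp)
      · intro _
        exact ⟨⟨Fin.elim0, by simp [hg]⟩, rfl⟩
    rw [Nf, Nat.card_congr this]
    simp
  · rw [if_neg hg, Nf]
    have : IsEmpty (Wtype g 0) := by
      constructor
      rintro ⟨w, hw⟩
      apply hg
      simpa using hw
    simp

noncomputable def walkEquiv (g : FreeGroup (Fin 2)) (k : ℕ) :
    Wtype g (k + 1) ≃ Σ p : Fin 2 × Bool, Wtype (g * gen p) k :=
  (Equiv.subtypeEquiv (Fin.consEquiv fun _ : Fin (k+1) => genSet).symm (fun w => by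
      rw [List.ofFn_succ, List.prod_cons]
      rfl)).trans <|
  (Equiv.subtypeProdEquivSigmaSubtype
      (fun (s : genSet) (w : Fin k → genSet) =>
        g * ((s : FreeGroup (Fin 2)) * (List.ofFn fun i => ((w i : FreeGroup (Fin 2)))).prod) = 1)).trans <|
  ((Equiv.sigmaCongrLeft (β := fun s : genSet =>
      {w : Fin k → genSet // g * ((s : FreeGroup (Fin 2)) * (List.ofFn fun i => ((w i : FreeGroup (Fin 2)))).prod) = 1})
    genEquiv).symm).trans <|
  Equiv.sigmaCongrRight (fun p => Equiv.subtypeEquivRight (fun w => by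
    rw [genEquiv_coe, ← mul_assoc]))

lemma Nf_succ (g : FreeGroup (Fin 2)) (k : ℕ) :
    Nf g (k + 1) = ∑ p : Fin 2 × Bool, Nf (g * gen p) k := by
  rw [Nf, Nat.card_congr (walkEquiv g k), nat_card_sigma]
  rfl

end Tree4

namespace Tree4


/-- counts of weighted paths: `Mf m k` = number of walks of length `k` from a vertex at
distance `m` to the root in the 4-regular tree -/
def Mf : ℕ → ℕ → ℕ
  | 0, 0 => 1
  | _ + 1, 0 => 0
  | 0, k + 1 => 4 * Mf 1 k
  | m + 1, k + 1 => Mf m k + 3 * Mf (m + 2) k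

lemma Mf_le (m k : ℕ) : Mf m k ≤ 4 ^ k := by
  induction k generalizing m with
  | zero => cases m <;> simp [Mf]
  | succ k ih =>
    cases m with
    | zero => rw [Mf]; calc 4 * Mf 1 k ≤ 4 * 4 ^ k := by have := ih 1; omega
                           _ = 4 ^ (k+1) := by ring
    | succ m =>
      rw [Mf]
      have h1 := ih m
      have h2 := ih (m + 2)
      calc Mf m k + 3 * Mf (m+2) k ≤ 4 ^ k + 3 * 4 ^ k := by omega
        _ = 4 ^ (k+1) := by ring


lemma Mf_zero_zero : Mf 0 0 = 1 := rfl
lemma Mf_zero_succ (k : ℕ) : Mf 0 (k+1) = 4 * Mf 1 k := rfl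
lemma Mf_succ_succ (m k : ℕ) : Mf (m+1) (k+1) = Mf m k + 3 * Mf (m+2) k := rfl
lemma Mf_succ_zero (m : ℕ) : Mf (m+1) 0 = 0 := rfl

open FreeGroup in
theorem Nf_eq_Mf (g : FreeGroup (Fin 2)) (k : ℕ) : Nf g k = Mf (norm g) k := by
  induction k generalizing g with
  | zero =>
    rw [Nf_zero]
    by_cases hg : g = 1
    · rw [if_pos hg, hg, FreeGroup.norm_one, Mf]
    · rw [if_neg hg]
      have : norm g ≠ 0 := by rwa [Ne, FreeGroup.norm_eq_zero]
      obtain ⟨n, hn⟩ := Nat.exists_eq_succ_of_ne_zero this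
      rw [hn, Mf]
  | succ k ih =>
    rw [Nf_succ]
    by_cases hg : g = 1
    · subst hg
      have hnorm : ∀ p : Fin 2 × Bool, norm (1 * gen p) = 1 := by
        intro p
        rw [one_mul, gen]
        exact norm_single p.1 p.2
      calc ∑ p : Fin 2 × Bool, Nf (1 * gen p) k
          = ∑ _p : Fin 2 × Bool, Mf 1 k := by
            apply Finset.sum_congr rfl
            intro p _
            rw [ih, hnorm]
        _ = 4 * Mf 1 k := by
            rw [Finset.sum_const]
            simp [Fintype.card_prod]
        _ = Mf (norm (1:FreeGroup (Fin 2))) (k+1) := by rw [FreeGroup.norm_one, Mf]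
    · have hL : g.toWord ≠ [] := by
        rw [Ne, toWord_eq_nil_iff]; exact hg
      set P := g.toWord.getLast hL with hP
      have hnorm_pos : norm g ≠ 0 := by rwa [Ne, FreeGroup.norm_eq_zero]
      obtain ⟨n, hn⟩ := Nat.exists_eq_succ_of_ne_zero hnorm_pos
      have hcancel : norm (g * gen (P.1, !P.2)) = n := by
        have := norm_mul_single_cancel hL (a := P.1) (b := P.2) (by rw [← hP])
        rw [gen] at *
        omega
      have hext : ∀ p : Fin 2 × Bool, p ≠ (P.1, !P.2) → norm (g * gen p) = n + 2 := by
        rintro ⟨c, d⟩ hne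
        have h2 : g.toWord.getLast? ≠ some (c, !d) := by
          rw [List.getLast?_eq_getLast hL, ← hP]
          intro hc
          apply hne
          have hPc : P = (c, !d) := Option.some_injective _ hc
          have h1 : c = P.1 := by rw [hPc]
          have h2 : (!d) = P.2 := by rw [hPc]
          have h3 : d = !P.2 := by rw [← h2, Bool.not_not]
          rw [h1, h3]
        have := norm_mul_single_ext (g := g) (c := c) (d := d) (Or.inr h2)
        rw [gen, this, hn]
      calc ∑ p : Fin 2 × Bool, Nf (g * gen p) k
          = ∑ p : Fin 2 × Bool, Mf (norm (g * gen p)) k := by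
            exact Finset.sum_congr rfl fun p _ => ih _
        _ = Mf n k + ∑ p ∈ Finset.univ.erase (P.1, !P.2), Mf (norm (g * gen p)) k := by
            rw [← Finset.add_sum_erase _ _ (Finset.mem_univ ((P.1, !P.2) : Fin 2 × Bool)), hcancel]
        _ = Mf n k + 3 * Mf (n + 2) k := by
            congr 1
            rw [Finset.sum_congr rfl (fun p hp => by
              rw [hext p (Finset.ne_of_mem_erase hp)]), Finset.sum_const]
            have : (Finset.univ.erase ((P.1, !P.2) : Fin 2 × Bool)).card = 3 := by
              rw [Finset.card_erase_of_mem (Finset.mem_univ _)]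
              simp [Fintype.card_prod]
            rw [this]
            ring
        _ = Mf (norm g) (k + 1) := by rw [hn, Mf]

noncomputable def pp (m k : ℕ) : ℝ := (Mf m k : ℝ) / 4 ^ k

lemma pp_nonneg (m k : ℕ) : 0 ≤ pp m k := by rw [pp]; positivity

lemma pp_le_one (m k : ℕ) : pp m k ≤ 1 := by
  rw [pp, div_le_one (by positivity)]
  exact_mod_cast Mf_le m k

noncomputable def u (m : ℕ) (z : ℝ) : ℝ := ∑' k, pp m k * z ^ k

lemma term_nonneg (m k : ℕ) {z : ℝ} (hz : 0 ≤ z) : 0 ≤ pp m k * z ^ k :=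
  mul_nonneg (pp_nonneg m k) (pow_nonneg hz k)

lemma term_le (m k : ℕ) {z : ℝ} (hz : 0 ≤ z) : pp m k * z ^ k ≤ z ^ k := by
  have := pp_le_one m k
  nlinarith [pow_nonneg hz k, pp_nonneg m k]

lemma summable_u (m : ℕ) {z : ℝ} (hz0 : 0 ≤ z) (hz1 : z < 1) :
    Summable (fun k => pp m k * z ^ k) := by
  apply Summable.of_nonneg_of_le (fun k => term_nonneg m k hz0) (fun k => term_le m k hz0)
  exact summable_geometric_of_lt_one hz0 hz1

lemma u_nonneg (m : ℕ) {z : ℝ} (hz0 : 0 ≤ z) : 0 ≤ u m z :=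
  tsum_nonneg (fun k => term_nonneg m k hz0)

lemma u_le (m : ℕ) {z : ℝ} (hz0 : 0 ≤ z) (hz1 : z < 1) : u m z ≤ (1 - z)⁻¹ := by
  have h1 : u m z ≤ ∑' k : ℕ, z ^ k :=
    Summable.tsum_le_tsum (fun k => term_le m k hz0) (summable_u m hz0 hz1)
      (summable_geometric_of_lt_one hz0 hz1)
  rwa [tsum_geometric_of_lt_one hz0 hz1] at h1

lemma u_zero_eq {z : ℝ} (hz0 : 0 ≤ z) (hz1 : z < 1) : u 0 z = 1 + z * u 1 z := by
  rw [u, Summable.tsum_eq_zero_add (summable_u 0 hz0 hz1)]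
  congr 1
  · simp [pp, Mf_zero_zero]
  · rw [u, ← tsum_mul_left]
    apply tsum_congr
    intro k
    rw [pp, pp, Mf_zero_succ]
    push_cast
    ring

lemma u_succ_eq (m : ℕ) {z : ℝ} (hz0 : 0 ≤ z) (hz1 : z < 1) :
    u (m+1) z = z/4 * u m z + 3*z/4 * u (m+2) z := by
  rw [u, Summable.tsum_eq_zero_add (summable_u (m+1) hz0 hz1)]
  have h0 : pp (m+1) 0 * z ^ 0 = 0 := by simp [pp, Mf_succ_zero]
  rw [h0, zero_add]
  have hterm : ∀ k : ℕ, pp (m+1) (k+1) * z ^ (k+1)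
      = z/4 * (pp m k * z ^ k) + 3*z/4 * (pp (m+2) k * z ^ k) := by
    intro k
    rw [pp, pp, pp, Mf_succ_succ]
    push_cast
    ring
  rw [tsum_congr hterm, Summable.tsum_add ((summable_u m hz0 hz1).mul_left _)
    ((summable_u (m+2) hz0 hz1).mul_left _), tsum_mul_left, tsum_mul_left]
  rfl


noncomputable def rr (z : ℝ) : ℝ := Real.sqrt (4 - 3 * z ^ 2)

lemma rr_sq {z : ℝ} (h : 3 * z ^ 2 ≤ 4) : rr z ^ 2 = 4 - 3 * z ^ 2 :=
  Real.sq_sqrt (by linarith)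

lemma rr_nonneg (z : ℝ) : 0 ≤ rr z := Real.sqrt_nonneg _

lemma rr_gt_one {z : ℝ} (hz1 : z < 1) (hz0 : 0 ≤ z) : 1 < rr z := by
  have h : (1 : ℝ) < 4 - 3 * z ^ 2 := by nlinarith
  calc (1:ℝ) = Real.sqrt 1 := (Real.sqrt_one).symm
    _ < rr z := Real.sqrt_lt_sqrt (by norm_num) h

lemma rr_lt_two {z : ℝ} (hz0 : 0 < z) (hz1 : z ≤ 1) : rr z < 2 := by
  have h : 4 - 3 * z ^ 2 < 4 := by nlinarith
  calc rr z < Real.sqrt 4 := Real.sqrt_lt_sqrt (by nlinarith) h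
    _ = 2 := by
        rw [show (4:ℝ) = 2^2 by norm_num, Real.sqrt_sq (by norm_num)]

/-- main generating function identity -/
theorem u_zero_closed {z : ℝ} (hz0 : 0 < z) (hz1 : z < 1) :
    u 0 z * (1 + rr z) = 3 := by
  set r := rr z with hrdef
  have hz0' : (0:ℝ) ≤ z := le_of_lt hz0
  have hr2 : r ^ 2 = 4 - 3 * z ^ 2 := rr_sq (by nlinarith)
  have hr1 : 1 < r := rr_gt_one hz1 hz0'
  have hr2' : r < 2 := rr_lt_two hz0 (le_of_lt hz1)
  set α := (2 - r) / (3 * z) with hα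
  set β := (2 + r) / (3 * z) with hβ
  have hzne : z ≠ 0 := ne_of_gt hz0
  have hαβ : α * β = 1 / 3 := by
    rw [hα, hβ]
    field_simp
    nlinarith [hr2]
  have hαβ' : α + β = 4 / (3 * z) := by rw [hα, hβ]; ring
  have hα_nonneg : 0 ≤ α := by
    apply div_nonneg (by linarith) (by linarith)
  have hβ_gt : 1 < β := by
    rw [hβ]
    rw [lt_div_iff₀ (by linarith)]
    linarith
  -- the sequence v m = u (m+1) z - α * u m z satisfies v (m+1) = β * v m
  set v : ℕ → ℝ := fun m => u (m+1) z - α * u m z with hv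
  have hvrec : ∀ m, v (m+1) = β * v m := by
    intro m
    have h := u_succ_eq m hz0' hz1
    rw [hv]
    simp only
    have hexp : u (m+2) z = 4/(3*z) * u (m+1) z - 1/3 * u m z := by
      field_simp at h ⊢
      linarith [h]
    rw [hexp]
    have : 4/(3*z) - α = β := by rw [hα, hβ]; field_simp; ring
    calc 4/(3*z) * u (m+1) z - 1/3 * u m z - α * u (m+1) z
        = (4/(3*z) - α) * u (m+1) z - (α * β) * u m z := by rw [hαβ]; ring
      _ = β * (u (m+1) z - α * u m z) := by rw [this]; ring
  have hvpow : ∀ m, v m = β ^ m * v 0 := by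
    intro m
    induction m with
    | zero => simp
    | succ m ih => rw [hvrec m, ih]; ring
  have hvbound : ∀ m, |v m| ≤ (1 + α) * (1 - z)⁻¹ := by
    intro m
    rw [hv]
    simp only
    have h1 := u_le (m+1) hz0' hz1
    have h2 := u_le m hz0' hz1
    have h3 := u_nonneg (m+1) hz0'
    have h4 := u_nonneg m hz0'
    rw [abs_le]
    constructor <;> nlinarith [mul_le_mul_of_nonneg_left h2 hα_nonneg,
      mul_nonneg hα_nonneg h4, inv_nonneg.mpr (by linarith : (0:ℝ) ≤ 1 - z)]
  have hv0 : v 0 = 0 := by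
    by_contra h
    have habs : 0 < |v 0| := abs_pos.mpr h
    obtain ⟨m, hm⟩ := pow_unbounded_of_one_lt (((1 + α) * (1 - z)⁻¹) / |v 0|) hβ_gt
    have := hvbound m
    rw [hvpow m, abs_mul, abs_pow, abs_of_pos (by linarith : (0:ℝ) < β)] at this
    rw [div_lt_iff₀ habs] at hm
    linarith
  -- hence u 1 z = α * u 0 z, and the closed form follows
  have hu1 : u 1 z = α * u 0 z := by
    have := hv0
    rw [hv] at this
    simp only at this
    linarith
  have h0 := u_zero_eq hz0' hz1
  rw [hu1] at h0
  -- u 0 z = 1 + z * α * u 0 z, with 1 - z*α = (1+r)/3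
  have hzα : 1 - z * α = (1 + r) / 3 := by
    rw [hα]
    field_simp
    ring
  have : u 0 z * ((1 + r)/3) = 1 := by
    rw [← hzα]
    linarith [h0]
  linarith [this]


lemma u_zero_le_three {z : ℝ} (hz0 : 0 < z) (hz1 : z < 1) : u 0 z ≤ 3 := by
  have h := u_zero_closed hz0 hz1
  have hr := rr_nonneg z
  have hu := u_nonneg 0 (le_of_lt hz0)
  nlinarith

lemma sum_range_pp_le (K : ℕ) : ∑ k ∈ Finset.range K, pp 0 k ≤ 3 := by
  have key : ∀ z : ℝ, 0 < z → z < 1 →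
      z ^ K * (∑ k ∈ Finset.range K, pp 0 k) ≤ 3 := by
    intro z hz0 hz1
    have hz0' := le_of_lt hz0
    have h1 : ∑ k ∈ Finset.range K, pp 0 k * z ^ k ≤ u 0 z := by
      apply Summable.sum_le_tsum _ (fun k _ => term_nonneg 0 k hz0') (summable_u 0 hz0' hz1)
    have h2 : z ^ K * (∑ k ∈ Finset.range K, pp 0 k)
        ≤ ∑ k ∈ Finset.range K, pp 0 k * z ^ k := by
      rw [Finset.mul_sum]
      apply Finset.sum_le_sum
      intro k hk
      have hkK : k ≤ K := le_of_lt (Finset.mem_range.mp hk)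
      have : z ^ K ≤ z ^ k := pow_le_pow_of_le_one hz0' (le_of_lt hz1) hkK
      nlinarith [pp_nonneg 0 k]
    linarith [u_zero_le_three hz0 hz1]
  set S := ∑ k ∈ Finset.range K, pp 0 k with hS
  have hSnn : 0 ≤ S := Finset.sum_nonneg fun k _ => pp_nonneg 0 k
  -- take z → 1
  have hz_mem : ∀ j : ℕ, 0 < 1 - 1/((j:ℝ)+2) ∧ 1 - 1/((j:ℝ)+2) < 1 := by
    intro j
    have h2 : (0:ℝ) < (j:ℝ) + 2 := by positivity
    constructor
    · have : 1/((j:ℝ)+2) < 1 := by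
        rw [div_lt_one h2]; linarith
      linarith
    · have : 0 < 1/((j:ℝ)+2) := by positivity
      linarith
  have hten : Filter.Tendsto (fun j : ℕ => (1 - 1/((j:ℝ)+2)) ^ K) Filter.atTop (nhds 1) := by
    have h1 : Filter.Tendsto (fun j : ℕ => 1 - 1/((j:ℝ)+2)) Filter.atTop (nhds 1) := by
      have h0 : Filter.Tendsto (fun j : ℕ => 1/((j:ℝ)+2)) Filter.atTop (nhds 0) := by
        have := (tendsto_one_div_add_atTop_nhds_zero_nat (𝕜 := ℝ)).comp (Filter.tendsto_add_atTop_nat 1)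
        apply this.congr
        intro n
        simp only [Function.comp_apply]
        push_cast
        ring_nf
      have := h0.const_sub 1
      simpa using this
    have := h1.pow K
    simpa using this
  -- S * zⱼ^K ≤ 3 for all j, and zⱼ^K → 1
  have hlim : Filter.Tendsto (fun j : ℕ => (1 - 1/((j:ℝ)+2)) ^ K * S) Filter.atTop (nhds S) := by
    have := hten.mul_const S
    simpa using this
  have hle : ∀ j : ℕ, (1 - 1/((j:ℝ)+2)) ^ K * S ≤ 3 := fun j =>
    key _ (hz_mem j).1 (hz_mem j).2
  exact le_of_tendsto hlim (Filter.Eventually.of_forall hle)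

lemma summable_pp : Summable (pp 0) :=
  summable_of_sum_range_le (fun k => pp_nonneg 0 k) sum_range_pp_le


noncomputable def phi (z : ℝ) : ℝ := 3 * z / ((1 + rr z) * (2 + rr z))

noncomputable def Phi (z : ℝ) : ℝ := Real.log (1 + rr z) - 2 * Real.log (2 + rr z)

lemma continuous_rr : Continuous rr := by
  apply Real.continuous_sqrt.comp
  continuity

lemma continuous_phi : Continuous phi := by
  apply Continuous.div (by continuity) (((continuous_const.add continuous_rr).mul
    (continuous_const.add continuous_rr)))
  intro z
  have := rr_nonneg z
  exact mul_ne_zero (ne_of_gt (by show (0:ℝ) < 1 + rr z; linarith)) (ne_of_gt (by show (0:ℝ) < 2 + rr z; linarith))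

lemma hasDerivAt_Phi {z : ℝ} (hz0 : 0 ≤ z) (hz1 : z ≤ 1) : HasDerivAt Phi (phi z) z := by
  have hpos : (0:ℝ) < 4 - 3 * z ^ 2 := by nlinarith
  have hr2 : rr z ^ 2 = 4 - 3 * z ^ 2 := rr_sq (by nlinarith)
  have hrpos : 0 < rr z := Real.sqrt_pos.mpr hpos
  have hinner : HasDerivAt (fun w : ℝ => 4 - 3 * w ^ 2) (-(6 * z)) z := by
    have h := ((hasDerivAt_pow 2 z).const_mul (3:ℝ)).const_sub 4
    norm_num at h
    exact h.congr_deriv (by ring)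
  have hrd : HasDerivAt rr (1 / (2 * rr z) * (-(6 * z))) z := by
    have hs := (Real.hasDerivAt_sqrt (ne_of_gt hpos)).comp z hinner
    exact hs
  have h1r : (0:ℝ) < 1 + rr z := by linarith
  have h2r : (0:ℝ) < 2 + rr z := by linarith
  have hlog1 : HasDerivAt (fun w => Real.log (1 + rr w))
      ((1 + rr z)⁻¹ * (1 / (2 * rr z) * (-(6 * z)))) z := by
    have := (Real.hasDerivAt_log (ne_of_gt h1r)).comp z (hrd.const_add 1)
    simpa [one_div, Function.comp_def] using this
  have hlog2 : HasDerivAt (fun w => Real.log (2 + rr w))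
      ((2 + rr z)⁻¹ * (1 / (2 * rr z) * (-(6 * z)))) z := by
    have := (Real.hasDerivAt_log (ne_of_gt h2r)).comp z (hrd.const_add 2)
    simpa [one_div, Function.comp_def] using this
  have h := hlog1.sub (hlog2.const_mul 2)
  have heq : (1 + rr z)⁻¹ * (1 / (2 * rr z) * (-(6 * z)))
      - 2 * ((2 + rr z)⁻¹ * (1 / (2 * rr z) * (-(6 * z)))) = phi z := by
    rw [phi]
    field_simp
    nlinarith [hr2, hrpos]
  rw [heq] at h
  exact h.congr_deriv rfl

lemma pointwise_sum_eq {z : ℝ} (hz0 : 0 < z) (hz1 : z < 1) :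
    ∑' n : ℕ, pp 0 (n+1) * z ^ n = phi z := by
  have hz0' := le_of_lt hz0
  set T := ∑' n : ℕ, pp 0 (n+1) * z ^ n with hT
  have hshift : u 0 z = 1 + z * T := by
    rw [u, Summable.tsum_eq_zero_add (summable_u 0 hz0' hz1)]
    congr 1
    · simp [pp, Mf_zero_zero]
    · rw [hT, ← tsum_mul_left]
      apply tsum_congr
      intro n
      ring
  have hclosed := u_zero_closed hz0 hz1
  have hr2 : rr z ^ 2 = 4 - 3 * z ^ 2 := rr_sq (by nlinarith)
  have h1r : (0:ℝ) < 1 + rr z := by have := rr_nonneg z; linarith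
  have h2r : (0:ℝ) < 2 + rr z := by have := rr_nonneg z; linarith
  rw [hshift] at hclosed
  rw [phi, eq_div_iff (ne_of_gt (mul_pos h1r h2r))]
  nlinarith [hclosed, hr2]

lemma summable_pp_shift : Summable (fun n : ℕ => pp 0 (n+1)) :=
  (summable_nat_add_iff 1).mpr summable_pp

lemma summable_target : Summable (fun n : ℕ => pp 0 (n+1) / (n+1)) := by
  apply Summable.of_nonneg_of_le (fun n => div_nonneg (pp_nonneg 0 (n+1)) (by positivity)) _ summable_pp_shift
  intro n
  rw [div_le_iff₀ (by positivity : (0:ℝ) < (n:ℝ)+1)]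
  nlinarith [pp_nonneg 0 (n+1), (by exact_mod_cast Nat.le_add_left 1 n : (1:ℝ) ≤ (n:ℝ)+1)]

theorem tsum_eq_integral : ∑' n : ℕ, pp 0 (n+1) / ((n:ℝ)+1) = Phi 1 - Phi 0 := by
  classical
  set μ := MeasureTheory.volume.restrict (Set.Ioc (0:ℝ) 1) with hμ
  set f : ℕ → ℝ → ℝ := fun n z => pp 0 (n+1) * z ^ n with hf
  have hmeas : ∀ n, MeasureTheory.AEStronglyMeasurable (f n) μ := fun n =>
    ((continuous_const.mul (continuous_pow n)).aestronglyMeasurable)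
  have hbound : ∀ n, ∫⁻ z, ‖f n z‖₊ ∂μ ≤ (‖pp 0 (n+1)‖₊ : ENNReal) := by
    intro n
    have h1 : ∫⁻ z, ‖f n z‖₊ ∂μ ≤ ∫⁻ _, (‖pp 0 (n+1)‖₊ : ENNReal) ∂μ := by
      apply MeasureTheory.lintegral_mono_ae
      rw [hμ, MeasureTheory.ae_restrict_iff' measurableSet_Ioc]
      apply Filter.Eventually.of_forall
      intro z hz
      simp only [ENNReal.coe_le_coe, ← NNReal.coe_le_coe, coe_nnnorm, Real.norm_eq_abs]
      have hz0 : 0 ≤ z := le_of_lt hz.1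
      rw [hf]
      simp only
      rw [abs_of_nonneg (mul_nonneg (pp_nonneg 0 (n+1)) (pow_nonneg hz0 n)),
        abs_of_nonneg (pp_nonneg 0 (n+1))]
      nlinarith [pow_le_one₀ (n := n) hz0 hz.2, pp_nonneg 0 (n+1), pow_nonneg hz0 n]
    rw [MeasureTheory.lintegral_const, hμ] at h1
    simpa [Real.volume_Ioc] using h1
  have hsum_nn : Summable (fun n => ‖pp 0 (n+1)‖₊) := by
    rw [← NNReal.summable_coe]
    apply summable_pp_shift.congr
    intro n
    rw [coe_nnnorm, Real.norm_eq_abs, abs_of_nonneg (pp_nonneg 0 (n+1))]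
  have hlint : ∑' n, ∫⁻ z, ‖f n z‖₊ ∂μ ≠ ⊤ := by
    apply ne_top_of_le_ne_top _ (ENNReal.tsum_le_tsum hbound)
    exact ENNReal.tsum_coe_ne_top_iff_summable.mpr hsum_nn
  have hkey := MeasureTheory.integral_tsum hmeas hlint
  -- RHS evaluation
  have hRHS : ∀ n : ℕ, ∫ z, f n z ∂μ = pp 0 (n+1) / ((n:ℝ)+1) := by
    intro n
    rw [hμ, ← intervalIntegral.integral_of_le zero_le_one]
    rw [hf]
    simp only
    rw [intervalIntegral.integral_const_mul, integral_pow]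
    push_cast
    ring
  -- LHS evaluation
  have hLHS : ∫ z, (∑' n, f n z) ∂μ = Phi 1 - Phi 0 := by
    have hae : μ = MeasureTheory.volume.restrict (Set.Ioo (0:ℝ) 1) := by
      rw [hμ, MeasureTheory.Measure.restrict_congr_set MeasureTheory.Ioo_ae_eq_Ioc.symm]
    rw [hae]
    rw [MeasureTheory.setIntegral_congr_fun measurableSet_Ioo
      (fun z hz => pointwise_sum_eq hz.1 hz.2)]
    rw [show MeasureTheory.volume.restrict (Set.Ioo (0:ℝ) 1)
        = MeasureTheory.volume.restrict (Set.Ioc (0:ℝ) 1) from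
      MeasureTheory.Measure.restrict_congr_set MeasureTheory.Ioo_ae_eq_Ioc]
    rw [← intervalIntegral.integral_of_le zero_le_one]
    apply intervalIntegral.integral_eq_sub_of_hasDerivAt
    · intro x hx
      rw [Set.uIcc_of_le zero_le_one] at hx
      exact hasDerivAt_Phi hx.1 hx.2
    · exact continuous_phi.intervalIntegrable 0 1
  calc ∑' n : ℕ, pp 0 (n+1) / ((n:ℝ)+1)
      = ∑' n : ℕ, ∫ z, f n z ∂μ := tsum_congr (fun n => (hRHS n).symm)
    _ = ∫ z, (∑' n, f n z) ∂μ := hkey.symm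
    _ = Phi 1 - Phi 0 := hLHS


lemma retProb_eq (k : ℕ) : retProb k = pp 0 k := by
  rw [retProb, pp]
  congr 2
  have h1 : Nat.card {w : Fin k → genSet //
      (List.ofFn fun i => ((w i : FreeGroup (Fin 2)))).prod = 1} = Nf 1 k := by
    apply Nat.card_congr
    exact Equiv.subtypeEquivRight (fun w => by rw [one_mul])
  rw [h1, Nf_eq_Mf, FreeGroup.norm_one]

end Tree4

/-- Proposition: for the regular tree `T` of degree 4 (the Cayley graph of the free group on
2 generators), the tree entropy `h(T) = log 4 - ∑_{k≥1} p_k(o;T)/k` equals `3 log(3/2)`. -/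
theorem stmt10 :
    Real.log 4 - ∑' k : ℕ, retProb (k + 1) / (k + 1) = 3 * Real.log (3 / 2) := by
  have hsum : ∑' k : ℕ, retProb (k + 1) / ((k : ℝ) + 1)
      = ∑' n : ℕ, Tree4.pp 0 (n+1) / ((n : ℝ) + 1) :=
    tsum_congr fun k => by rw [Tree4.retProb_eq]
  rw [hsum, Tree4.tsum_eq_integral]
  have hrr1 : Tree4.rr 1 = 1 := by
    rw [Tree4.rr]
    norm_num
  have hrr0 : Tree4.rr 0 = 2 := by
    rw [Tree4.rr]
    norm_num
  rw [Tree4.Phi, Tree4.Phi, hrr1, hrr0]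
  norm_num
  rw [show (4:ℝ) = 2^2 by norm_num, show (3:ℝ)/2 = 3/2 by norm_num,
    Real.log_div (by norm_num) (by norm_num), Real.log_pow]
  push_cast
  ring
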